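/- arXiv:2310.17637 — 2 statements merged into one kernel-verified Lean document; each statement's English description precedes it below -/
import Mathlib

section
/- (Boundary-condition positivity theorem.) For faces f = 1, …, n_f and surface points l = 1, …, n_{q,f}, suppose given: interior quadrature states y_q ∈ 𝒢 (q = 1, …, n_q); interior trace states y_{f,l} ∈ 𝒢 and prescribed boundary states w_{f,l} ∈ 𝒢, each with all concentration components strictly positive; mass-conserving normal viscous boundary fluxes F_{f,l} contracted with the outward unit normal; surface weights ν_{f,l} ≥ 0; coefficients θ_q ≥ 0 and θ_{f,l} > 0 with Σ_q θ_q + Σ_{f,l} θ_{f,l} = 1; dissipation coefficients β_{f,l} > max{β*(y_{f,l}, F_{f,l}), β*(w_{f,l}, F_{f,l})}; and a ratio τ = Δt*/|κ| > 0 satisfying τ·β_{f,l}·ν_{f,l} ≤ θ_{f,l} for all f, l. Then the updated element average ȳ_v := Σ_q θ_q y_q + Σ_{f,l} θ_{f,l} y_{f,l} + τ·Σ_{f,l} ν_{f,l}·[ F_{f,l} − (β_{f,l}/2)(y_{f,l} − w_{f,l}) ] belongs to 𝒢. -/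
open scoped BigOperators

namespace PaperStmt

noncomputable section

abbrev State (d ns : ℕ) : Type := (Fin d → ℝ) × ℝ × (Fin ns → ℝ)

variable {d ns : ℕ}

/-- Euclidean dot product of momentum-like vectors. -/
def dotP (a b : Fin d → ℝ) : ℝ := ∑ k, a k * b k

/-- Squared Euclidean norm. -/
def normSq (a : Fin d → ℝ) : ℝ := ∑ k, a k ^ 2

/-- Density `ρ(y) = Σ_i W_i C_i`. -/
def rho (W : Fin ns → ℝ) (y : State d ns) : ℝ := ∑ i, W i * y.2.2 i

/-- Scaled shifted internal energy `Z(y) = ρ(y)·E − |m|²/2 − ρ(y)²·u0`. -/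
def Z (W : Fin ns → ℝ) (u0 : ℝ) (y : State d ns) : ℝ :=
  rho W y * y.2.1 - normSq y.1 / 2 - rho W y ^ 2 * u0

/-- The admissible set `𝒢`. -/
def Gset (W : Fin ns → ℝ) (u0 : ℝ) : Set (State d ns) :=
  {y | (∀ i, 0 ≤ y.2.2 i) ∧ 0 < rho W y ∧ 0 < Z W u0 y}

/-- Mass production of a normal viscous flux: `M(G) = Σ_i W_i G_{C,i}`. -/
def Mflux (W : Fin ns → ℝ) (G : State d ns) : ℝ := ∑ i, W i * G.2.2 i

/-- `b(y,G) = ρ(y)·G_E − m·G_m`. -/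
def bCoef (W : Fin ns → ℝ) (y G : State d ns) : ℝ :=
  rho W y * G.2.1 - dotP y.1 G.1

/-- `β_T(y,G) = (|b| + √(b² + 2 Z(y) |G_m|²)) / (2 Z(y))`. -/
def betaT (W : Fin ns → ℝ) (u0 : ℝ) (y G : State d ns) : ℝ :=
  (|bCoef W y G| + Real.sqrt (bCoef W y G ^ 2 + 2 * Z W u0 y * normSq G.1)) /
    (2 * Z W u0 y)

/-- `β*(y,G) = max{ max_i |G_{C,i}|/C_i , β_T(y,G) }`. -/
def betaStar (W : Fin ns → ℝ) (u0 : ℝ) (y G : State d ns) : ℝ :=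
  max (⨆ i, |G.2.2 i| / y.2.2 i) (betaT W u0 y G)

-- auxiliary lemmas
lemma normSq_nonneg (a : Fin d → ℝ) : 0 ≤ normSq a :=
  Finset.sum_nonneg fun k _ => sq_nonneg _

lemma betaT_nonneg {W : Fin ns → ℝ} {u0 : ℝ} {y : State d ns} (G : State d ns)
    (hZ : 0 < Z W u0 y) : 0 ≤ betaT W u0 y G :=
  div_nonneg (add_nonneg (abs_nonneg _) (Real.sqrt_nonneg _)) (by linarith)

lemma rho_add_smul (W : Fin ns → ℝ) (y G : State d ns) (c : ℝ) :
    rho W (y + c • G) = rho W y + c * Mflux W G := by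
  simp only [rho, Mflux, Finset.mul_sum, ← Finset.sum_add_distrib]
  refine Finset.sum_congr rfl fun i _ => ?_
  show W i * (y.2.2 i + c * G.2.2 i) = _
  ring

lemma normSq_add_smul (a b : Fin d → ℝ) (c : ℝ) :
    normSq (a + c • b) = normSq a + 2 * c * dotP a b + c ^ 2 * normSq b := by
  simp only [normSq, dotP, Finset.mul_sum, ← Finset.sum_add_distrib]
  refine Finset.sum_congr rfl fun k _ => ?_
  show (a k + c * b k) ^ 2 = _
  ring

lemma mem_Gset_add_inv_smul (W : Fin ns → ℝ) (u0 : ℝ) (y G : State d ns)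
    (hC : ∀ i, 0 < y.2.2 i) (hρ : 0 < rho W y) (hZ : 0 < Z W u0 y)
    (hM : Mflux W G = 0) (β : ℝ) (hβ : betaStar W u0 y G < β) :
    y + β⁻¹ • G ∈ Gset W u0 := by
  have hβT : betaT W u0 y G < β := lt_of_le_of_lt (le_max_right _ _) hβ
  have hβ0 : 0 < β := lt_of_le_of_lt (betaT_nonneg G hZ) hβT
  have hρ' : rho W (y + β⁻¹ • G) = rho W y := by
    rw [rho_add_smul, hM, mul_zero, add_zero]
  refine ⟨fun i => ?_, by rwa [hρ'], ?_⟩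
  · -- concentrations
    have hsup : |G.2.2 i| / y.2.2 i < β :=
      lt_of_le_of_lt (le_trans (le_ciSup (f := fun j => |G.2.2 j| / y.2.2 j)
        (Set.Finite.bddAbove (Set.finite_range _)) i) (le_max_left _ _)) hβ
    have habs : |G.2.2 i| < β * y.2.2 i := (div_lt_iff₀ (hC i)).mp hsup
    have : -(β * y.2.2 i) < G.2.2 i := by
      have := abs_lt.mp habs; linarith [this.1]
    show 0 ≤ y.2.2 i + β⁻¹ * G.2.2 i
    have h4 : β⁻¹ * (β * y.2.2 i) = y.2.2 i := by field_simp
    have h5 : -(y.2.2 i) < β⁻¹ * G.2.2 i := by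
      have h6 := mul_lt_mul_of_pos_left this (inv_pos.mpr hβ0)
      rw [mul_neg, h4] at h6; exact h6
    linarith
  · -- Z positivity
    set b := bCoef W y G with hb
    set n := normSq G.1 with hn
    set Zy := Z W u0 y with hZy
    have hn0 : 0 ≤ n := normSq_nonneg _
    have hZ' : Z W u0 (y + β⁻¹ • G) = Zy + β⁻¹ * b - β⁻¹ ^ 2 * n / 2 := by
      show rho W (y + β⁻¹ • G) * (y + β⁻¹ • G).2.1 - normSq (y + β⁻¹ • G).1 / 2
          - rho W (y + β⁻¹ • G) ^ 2 * u0 = _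
      rw [hρ']
      have h1 : (y + β⁻¹ • G).2.1 = y.2.1 + β⁻¹ * G.2.1 := rfl
      have h2 : (y + β⁻¹ • G).1 = y.1 + β⁻¹ • G.1 := rfl
      rw [h1, h2, normSq_add_smul]
      simp only [hZy, Z, hb, bCoef, hn]
      ring
    rw [hZ']
    set s := Real.sqrt (b ^ 2 + 2 * Zy * n) with hs
    have hs0 : 0 ≤ s := Real.sqrt_nonneg _
    have hssq : s ^ 2 = b ^ 2 + 2 * Zy * n := Real.sq_sqrt (by nlinarith)
    have h1 : |b| + s < β * (2 * Zy) := by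
      have h := hβT
      rw [betaT, ← hb, ← hs] at h
      exact (div_lt_iff₀ (by linarith : (0:ℝ) < 2 * Zy)).mp h
    have h2 : -b ≤ |b| := neg_le_abs b
    have h3 : s < 2 * Zy * β + b := by linarith
    have key : 0 < Zy * β ^ 2 + b * β - n / 2 := by
      nlinarith [mul_pos hZ hβ0, sq_nonneg (2 * Zy * β + b)]
    have hβsq : (0:ℝ) < β ^ 2 := by positivity
    have : Zy + β⁻¹ * b - β⁻¹ ^ 2 * n / 2 = (Zy * β ^ 2 + b * β - n / 2) / β ^ 2 := by
      field_simp
    rw [this]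
    exact div_pos key hβsq


lemma cauchy_aux {ι : Type} [Fintype ι] (lam ρ x : ι → ℝ)
    (hlam : ∀ i, 0 ≤ lam i) (hρ : ∀ i, 0 < ρ i) :
    (∑ i, lam i * x i) ^ 2 ≤ (∑ i, lam i * ρ i) * (∑ i, lam i * x i ^ 2 / ρ i) := by
  have h := Finset.sum_mul_sq_le_sq_mul_sq Finset.univ
    (fun i => Real.sqrt (lam i * ρ i)) (fun i => Real.sqrt (lam i / ρ i) * x i)
  have e1 : ∀ i : ι, Real.sqrt (lam i * ρ i) * (Real.sqrt (lam i / ρ i) * x i)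
      = lam i * x i := by
    intro i
    rw [← mul_assoc, ← Real.sqrt_mul (mul_nonneg (hlam i) (hρ i).le)]
    have : lam i * ρ i * (lam i / ρ i) = lam i ^ 2 := by
      field_simp [(hρ i).ne']
    rw [this, Real.sqrt_sq (hlam i)]
  have e2 : ∀ i : ι, Real.sqrt (lam i * ρ i) ^ 2 = lam i * ρ i := fun i =>
    Real.sq_sqrt (mul_nonneg (hlam i) (hρ i).le)
  have e3 : ∀ i : ι, (Real.sqrt (lam i / ρ i) * x i) ^ 2 = lam i * x i ^ 2 / ρ i := by
    intro i
    rw [mul_pow, Real.sq_sqrt (div_nonneg (hlam i) (hρ i).le)]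
    ring
  calc (∑ i, lam i * x i) ^ 2
      = (∑ i, Real.sqrt (lam i * ρ i) * (Real.sqrt (lam i / ρ i) * x i)) ^ 2 := by
        rw [Finset.sum_congr rfl fun i _ => (e1 i)]
    _ ≤ (∑ i, Real.sqrt (lam i * ρ i) ^ 2) * (∑ i, (Real.sqrt (lam i / ρ i) * x i) ^ 2) := h
    _ = (∑ i, lam i * ρ i) * (∑ i, lam i * x i ^ 2 / ρ i) := by
        rw [Finset.sum_congr rfl fun i _ => (e2 i), Finset.sum_congr rfl fun i _ => (e3 i)]

lemma convex_mem {ι : Type} [Fintype ι] (W : Fin ns → ℝ) (u0 : ℝ)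
    (lam : ι → ℝ) (Y : ι → State d ns)
    (hlam : ∀ i, 0 ≤ lam i) (hsum : ∑ i, lam i = 1)
    (hY : ∀ i, Y i ∈ Gset W u0) :
    (∑ i, lam i • Y i) ∈ Gset W u0 := by
  classical
  set ybar := ∑ i, lam i • Y i with hybar
  -- component formulas
  have hC : ∀ j, ybar.2.2 j = ∑ i, lam i * (Y i).2.2 j := by
    intro j
    rw [hybar, Prod.snd_sum, Prod.snd_sum, Finset.sum_apply]
    rfl
  have hE : ybar.2.1 = ∑ i, lam i * (Y i).2.1 := by
    rw [hybar, Prod.snd_sum, Prod.fst_sum]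
    rfl
  have hm : ∀ k, ybar.1 k = ∑ i, lam i * (Y i).1 k := by
    intro k
    rw [hybar, Prod.fst_sum, Finset.sum_apply]
    rfl
  have hρbar : rho W ybar = ∑ i, lam i * rho W (Y i) := by
    simp only [rho, hC, Finset.mul_sum]
    rw [Finset.sum_comm]
    exact Finset.sum_congr rfl fun i _ => Finset.sum_congr rfl fun j _ => by ring
  -- existence of a positive weight
  have hexi : ∃ i, 0 < lam i := by
    by_contra h
    push_neg at h
    have : (∑ i, lam i) ≤ 0 := Finset.sum_nonpos fun i _ => h i
    rw [hsum] at this; linarith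
  obtain ⟨i0, hi0⟩ := hexi
  have hρpos : 0 < rho W ybar := by
    rw [hρbar]
    refine Finset.sum_pos' (fun i _ => mul_nonneg (hlam i) (hY i).2.1.le) ?_
    exact ⟨i0, Finset.mem_univ i0, mul_pos hi0 (hY i0).2.1⟩
  refine ⟨fun j => ?_, hρpos, ?_⟩
  · rw [hC]
    exact Finset.sum_nonneg fun i _ => mul_nonneg (hlam i) ((hY i).1 j)
  · -- Z positivity
    set A := ∑ i, lam i * rho W (Y i) with hA
    set T := ∑ i, lam i * normSq (Y i).1 / rho W (Y i) with hT
    set S := ∑ i, lam i * (Z W u0 (Y i) / rho W (Y i)) with hS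
    have hApos : 0 < A := by rw [← hρbar]; exact hρpos
    have hSpos : 0 < S := by
      refine Finset.sum_pos' (fun i _ => mul_nonneg (hlam i)
        (div_nonneg (hY i).2.2.le (hY i).2.1.le)) ?_
      exact ⟨i0, Finset.mem_univ i0,
        mul_pos hi0 (div_pos (hY i0).2.2 (hY i0).2.1)⟩
    -- Cauchy-Schwarz: normSq ybar.1 ≤ A * T
    have hCS : normSq ybar.1 ≤ A * T := by
      have hper : ∀ k : Fin d, (ybar.1 k) ^ 2
          ≤ A * ∑ i, lam i * ((Y i).1 k) ^ 2 / rho W (Y i) := by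
        intro k
        rw [hm k]
        exact cauchy_aux lam (fun i => rho W (Y i)) (fun i => (Y i).1 k) hlam
          (fun i => (hY i).2.1)
      calc normSq ybar.1 = ∑ k, (ybar.1 k) ^ 2 := rfl
        _ ≤ ∑ k : Fin d, A * ∑ i, lam i * ((Y i).1 k) ^ 2 / rho W (Y i) :=
            Finset.sum_le_sum fun k _ => hper k
        _ = A * T := by
            rw [← Finset.mul_sum, hT, Finset.sum_comm]
            congr 1
            refine Finset.sum_congr rfl fun i _ => ?_
            rw [normSq, Finset.mul_sum, Finset.sum_div]
    -- S expansion
    have hSexp : S = (∑ i, lam i * (Y i).2.1) - T / 2 - A * u0 := by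
      have e : ∀ i : ι, lam i * (Z W u0 (Y i) / rho W (Y i))
          = lam i * (Y i).2.1 - (lam i * normSq (Y i).1 / rho W (Y i)) / 2
            - (lam i * rho W (Y i)) * u0 := by
        intro i
        have hρi : rho W (Y i) ≠ 0 := (hY i).2.1.ne'
        field_simp [Z]
        simp only [Z]; ring
      rw [hS, Finset.sum_congr rfl fun i _ => e i, Finset.sum_sub_distrib,
        Finset.sum_sub_distrib, ← Finset.sum_div, ← Finset.sum_mul]
    have hAS : A * S = A * (∑ i, lam i * (Y i).2.1) - A * T / 2 - A * A * u0 := by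
      rw [hSexp]; ring
    have hZbar : Z W u0 ybar
        = A * (∑ i, lam i * (Y i).2.1) - normSq ybar.1 / 2 - A * A * u0 := by
      rw [Z, hρbar, hE]; ring
    rw [hZbar]
    nlinarith [mul_pos hApos hSpos]

lemma sum_sig {γ : Type*} [AddCommMonoid γ] {nf : ℕ} {nql : Fin nf → ℕ}
    (g : (Σ f : Fin nf, Fin (nql f)) → γ) :
    ∑ x, g x = ∑ f, ∑ l, g ⟨f, l⟩ := by
  rw [← Finset.univ_sigma_univ, Finset.sum_sigma]

lemma sum_merge2 {γ : Type*} [AddCommMonoid γ] {nf : ℕ} {nql : Fin nf → ℕ}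
    (X Y' : ∀ f : Fin nf, Fin (nql f) → γ) :
    ((∑ f, ∑ l, X f l) + ∑ f, ∑ l, Y' f l) = ∑ f, ∑ l, (X f l + Y' f l) := by
  rw [← Finset.sum_add_distrib]
  exact Finset.sum_congr rfl fun f _ => by rw [← Finset.sum_add_distrib]

lemma combo_id (y w F : State d ns) (θ τ ν b : ℝ) (hb : b ≠ 0) :
    (θ - τ * b * ν) • y + ((τ * b * ν / 2) • (y + b⁻¹ • F) + (τ * b * ν / 2) • (w + b⁻¹ • F))
      = θ • y + τ • (ν • (F - (b / 2) • (y - w))) := by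
  have h : τ * b * ν / 2 * b⁻¹ = τ * ν / 2 := by field_simp
  rw [smul_add, smul_add, smul_smul, smul_smul, h]
  module


/-- boundary-condition positivity theorem: with prescribed boundary states
`w_{f,l} ∈ 𝒢`, boundary viscous fluxes `F_{f,l}` appearing with full weight, and the
boundary penalty `δ^v_∂ = (β/2)(y⁺ − y_∂)`, the updated element average of the viscous
contribution lies in `𝒢` under the stated constraints. -/
theorem boundary_positivity (W : Fin ns → ℝ) (u0 : ℝ) (hW : ∀ i, 0 < W i)
    {nq nf : ℕ} (nql : Fin nf → ℕ)
    (yq : Fin nq → State d ns) (hyq : ∀ q, yq q ∈ Gset W u0)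
    (ytr w : ∀ f : Fin nf, Fin (nql f) → State d ns)
    (hytr : ∀ f l, ytr f l ∈ Gset W u0) (hw : ∀ f l, w f l ∈ Gset W u0)
    (hytrC : ∀ f l i, 0 < (ytr f l).2.2 i) (hwC : ∀ f l i, 0 < (w f l).2.2 i)
    (F : ∀ f : Fin nf, Fin (nql f) → State d ns)
    (hF : ∀ f l, Mflux W (F f l) = 0)
    (ν : ∀ f : Fin nf, Fin (nql f) → ℝ) (hν : ∀ f l, 0 ≤ ν f l)
    (θq : Fin nq → ℝ) (hθq : ∀ q, 0 ≤ θq q)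
    (θfl : ∀ f : Fin nf, Fin (nql f) → ℝ) (hθfl : ∀ f l, 0 < θfl f l)
    (hθsum : (∑ q, θq q) + (∑ f, ∑ l, θfl f l) = 1)
    (β : ∀ f : Fin nf, Fin (nql f) → ℝ)
    (hβ : ∀ f l,
      max (betaStar W u0 (ytr f l) (F f l)) (betaStar W u0 (w f l) (F f l)) < β f l)
    (τ : ℝ) (hτ : 0 < τ) (hτle : ∀ f l, τ * β f l * ν f l ≤ θfl f l) :
    (∑ q, θq q • yq q) + (∑ f, ∑ l, θfl f l • ytr f l)
      + τ • (∑ f, ∑ l, ν f l • (F f l - (β f l / 2) • (ytr f l - w f l)))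
      ∈ Gset W u0 := by
  classical
  have hβpos : ∀ f l, 0 < β f l := fun f l =>
    lt_of_le_of_lt (le_trans (betaT_nonneg (F f l) (hytr f l).2.2)
      (le_trans (le_max_right _ _) (le_max_left _ _))) (hβ f l)
  refine Set.mem_of_eq_of_mem ?_
    (convex_mem W u0
      (Sum.elim θq (Sum.elim
        (fun p : Σ f : Fin nf, Fin (nql f) => θfl p.1 p.2 - τ * β p.1 p.2 * ν p.1 p.2)
        (Sum.elim
          (fun p : Σ f : Fin nf, Fin (nql f) => τ * β p.1 p.2 * ν p.1 p.2 / 2)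
          (fun p : Σ f : Fin nf, Fin (nql f) => τ * β p.1 p.2 * ν p.1 p.2 / 2))))
      (Sum.elim yq (Sum.elim
        (fun p : Σ f : Fin nf, Fin (nql f) => ytr p.1 p.2)
        (Sum.elim
          (fun p : Σ f : Fin nf, Fin (nql f) => ytr p.1 p.2 + (β p.1 p.2)⁻¹ • F p.1 p.2)
          (fun p : Σ f : Fin nf, Fin (nql f) => w p.1 p.2 + (β p.1 p.2)⁻¹ • F p.1 p.2))))
      ?_ ?_ ?_)
  · -- the equality of sums
    rw [Fintype.sum_sum_type, Fintype.sum_sum_type, Fintype.sum_sum_type]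
    simp only [Sum.elim_inl, Sum.elim_inr]
    simp only [sum_sig]
    rw [sum_merge2, sum_merge2, add_assoc, Finset.smul_sum]
    simp only [Finset.smul_sum]
    rw [sum_merge2]
    congr 1
    refine Finset.sum_congr rfl fun f _ => Finset.sum_congr rfl fun l _ => ?_
    exact (combo_id (ytr f l) (w f l) (F f l) (θfl f l) τ (ν f l) (β f l)
      (hβpos f l).ne').symm
  · -- nonnegativity of weights
    rintro (q | p | p | p)
    · exact hθq q
    · exact sub_nonneg.mpr (hτle p.1 p.2)
    · exact div_nonneg (mul_nonneg (mul_nonneg hτ.le (hβpos p.1 p.2).le) (hν p.1 p.2)) (by norm_num)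
    · exact div_nonneg (mul_nonneg (mul_nonneg hτ.le (hβpos p.1 p.2).le) (hν p.1 p.2)) (by norm_num)
  · -- sum of weights is one
    rw [Fintype.sum_sum_type, Fintype.sum_sum_type, Fintype.sum_sum_type]
    simp only [Sum.elim_inl, Sum.elim_inr]
    simp only [sum_sig]
    rw [sum_merge2, sum_merge2]
    rw [show (∑ f, ∑ l, (θfl f l - τ * β f l * ν f l +
        (τ * β f l * ν f l / 2 + τ * β f l * ν f l / 2))) = ∑ f, ∑ l, θfl f l from
      Finset.sum_congr rfl fun f _ => Finset.sum_congr rfl fun l _ => by ring]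
    exact hθsum
  · -- membership of the pieces
    rintro (q | p | p | p)
    · exact hyq q
    · exact hytr p.1 p.2
    · exact mem_Gset_add_inv_smul W u0 _ _ (hytrC p.1 p.2) (hytr p.1 p.2).2.1
        (hytr p.1 p.2).2.2 (hF p.1 p.2) _
        (lt_of_le_of_lt (le_max_left _ _) (hβ p.1 p.2))
    · exact mem_Gset_add_inv_smul W u0 _ _ (hwC p.1 p.2) (hw p.1 p.2).2.1
        (hw p.1 p.2).2.2 (hF p.1 p.2) _
        (lt_of_le_of_lt (le_max_right _ _) (hβ p.1 p.2))


end
end PaperStmt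
end

section
/- Let y = (m, E, C) be a state with C_i > 0 for all i and Z(y) > 0, let Δy ∈ ℝ^d × ℝ × ℝ^{n_s}, and let θ > 0 and c > 0 be reals with c·(1 + α*(y, Δy)) < θ. Then the state y − (c/(θ − c))·Δy lies in the admissible set 𝒢 and all of its concentration components are strictly positive. -/
open scoped BigOperators

namespace PaperStmt

noncomputable section

variable {d ns : ℕ}

/-- `b(y,Δy) = −E·M(Δy) − ρ(y)·ΔE + m·Δm + 2 ρ(y) u0 M(Δy)` for a perturbation `Δy`. -/
def bPert (W : Fin ns → ℝ) (u0 : ℝ) (y dy : State d ns) : ℝ :=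
  -(y.2.1 * Mflux W dy) - rho W y * dy.2.1 + dotP y.1 dy.1
    + 2 * rho W y * u0 * Mflux W dy

/-- `g(y,Δy) = M(Δy)·ΔE − |Δm|²/2 − u0·M(Δy)²`. -/
def gPert (W : Fin ns → ℝ) (u0 : ℝ) (dy : State d ns) : ℝ :=
  Mflux W dy * dy.2.1 - normSq dy.1 / 2 - u0 * Mflux W dy ^ 2

/-- `α_T(y,Δy) = (−b + √(b² − 4 Z(y) g)) / (2 Z(y))` when the discriminant is
nonnegative, and `0` otherwise. -/
def alphaT (W : Fin ns → ℝ) (u0 : ℝ) (y dy : State d ns) : ℝ :=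
  if 0 ≤ bPert W u0 y dy ^ 2 - 4 * Z W u0 y * gPert W u0 dy then
    (-bPert W u0 y dy
        + Real.sqrt (bPert W u0 y dy ^ 2 - 4 * Z W u0 y * gPert W u0 dy)) /
      (2 * Z W u0 y)
  else 0

/-- `α*(y,Δy) = max{ max_i ΔC_i/C_i , α_T(y,Δy), 0 }`. -/
def alphaStar (W : Fin ns → ℝ) (u0 : ℝ) (y dy : State d ns) : ℝ :=
  max (⨆ i, dy.2.2 i / y.2.2 i) (max (alphaT W u0 y dy) 0)

lemma comp22 (y dy : State d ns) (t : ℝ) (i : Fin ns) :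
    (y - t • dy).2.2 i = y.2.2 i - t * dy.2.2 i := by
  simp [Prod.smul_snd, Prod.sub_def]

lemma comp21 (y dy : State d ns) (t : ℝ) :
    (y - t • dy).2.1 = y.2.1 - t * dy.2.1 := by
  simp [Prod.sub_def]

lemma comp1 (y dy : State d ns) (t : ℝ) (k : Fin d) :
    (y - t • dy).1 k = y.1 k - t * dy.1 k := by
  simp [Prod.smul_fst, Prod.sub_def]

lemma rho_sub_smul (W : Fin ns → ℝ) (y dy : State d ns) (t : ℝ) :
    rho W (y - t • dy) = rho W y - t * Mflux W dy := by
  unfold rho Mflux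
  rw [Finset.mul_sum, ← Finset.sum_sub_distrib]
  refine Finset.sum_congr rfl fun i _ => ?_
  rw [comp22]; ring

lemma normSq_sub_smul (y dy : State d ns) (t : ℝ) :
    normSq (y - t • dy).1
      = normSq y.1 - 2 * t * dotP y.1 dy.1 + t ^ 2 * normSq dy.1 := by
  unfold normSq dotP
  rw [Finset.mul_sum, Finset.mul_sum, ← Finset.sum_sub_distrib,
    ← Finset.sum_add_distrib]
  refine Finset.sum_congr rfl fun k _ => ?_
  rw [comp1]; ring

lemma Z_sub_smul (W : Fin ns → ℝ) (u0 : ℝ) (y dy : State d ns) (t : ℝ) :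
    Z W u0 (y - t • dy)
      = Z W u0 y + t * bPert W u0 y dy + t ^ 2 * gPert W u0 dy := by
  unfold Z bPert gPert
  rw [rho_sub_smul, normSq_sub_smul, comp21]
  ring

/-- time-step restriction for the modified flux interpolation: if
`θ > 0`, `c > 0` and `c·(1 + α*(y,Δy)) < θ`, then `y − (c/(θ − c))·Δy ∈ 𝒢`, with
strictly positive concentration components. -/
theorem modified_flux_time_step (W : Fin ns → ℝ) (u0 : ℝ) (hW : ∀ i, 0 < W i)
    (y dy : State d ns) (hC : ∀ i, 0 < y.2.2 i) (hZ : 0 < Z W u0 y)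
    (θ c : ℝ) (hθ : 0 < θ) (hc : 0 < c)
    (h : c * (1 + alphaStar W u0 y dy) < θ) :
    (y - (c / (θ - c)) • dy) ∈ Gset W u0 ∧
      ∀ i, 0 < (y - (c / (θ - c)) • dy).2.2 i := by
  set α := alphaStar W u0 y dy with hα
  have hα0 : 0 ≤ α := le_trans (le_max_right _ _) (le_max_right _ _)
  have hΛ : 0 < θ - c := by nlinarith
  set t : ℝ := c / (θ - c) with ht
  have ht0 : 0 < t := div_pos hc hΛ
  have htα : t * α < 1 := by
    rw [ht, div_mul_eq_mul_div, div_lt_one hΛ]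
    nlinarith
  -- concentrations
  have hCpos : ∀ i, 0 < (y - t • dy).2.2 i := by
    intro i
    rw [comp22]
    have hsup : dy.2.2 i / y.2.2 i ≤ α := by
      refine le_trans ?_ (le_max_left _ _)
      exact le_ciSup (f := fun j => dy.2.2 j / y.2.2 j) (Finite.bddAbove_range _) i
    have : dy.2.2 i ≤ α * y.2.2 i := by
      rw [div_le_iff₀ (hC i)] at hsup; linarith [hsup]
    nlinarith [hC i, mul_le_mul_of_nonneg_left this ht0.le,
      mul_pos (sub_pos.mpr htα) (hC i)]
  -- density
  have hrho : 0 < rho W (y - t • dy) := by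
    rcases isEmpty_or_nonempty (Fin ns) with he | hne
    · exfalso
      have h0 : rho W y = 0 := by simp [rho]
      have hn : (0:ℝ) ≤ normSq y.1 :=
        Finset.sum_nonneg (fun k _ => sq_nonneg (y.1 k))
      unfold Z at hZ
      rw [h0] at hZ
      nlinarith
    · exact Finset.sum_pos
        (fun i _ => mul_pos (hW i) (hCpos i)) Finset.univ_nonempty
  -- energy
  have hZ' : 0 < Z W u0 (y - t • dy) := by
    rw [Z_sub_smul]
    set b := bPert W u0 y dy
    set g := gPert W u0 dy
    have hαT : alphaT W u0 y dy ≤ α :=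
      le_trans (le_max_left _ _) (le_max_right _ _)
    have htT : t * alphaT W u0 y dy < 1 :=
      lt_of_le_of_lt (by nlinarith [hαT]) htα
    by_cases hD : 0 ≤ b ^ 2 - 4 * Z W u0 y * g
    · set s := Real.sqrt (b ^ 2 - 4 * Z W u0 y * g) with hs
      have hs0 : 0 ≤ s := Real.sqrt_nonneg _
      have hssq : s ^ 2 = b ^ 2 - 4 * Z W u0 y * g := Real.sq_sqrt hD
      have hT : alphaT W u0 y dy = (-b + s) / (2 * Z W u0 y) := by
        rw [alphaT, if_pos hD]
      rw [hT] at htT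
      have hkey : t * (-b + s) < 2 * Z W u0 y := by
        rw [mul_div_assoc', div_lt_one (by linarith : 0 < 2 * Z W u0 y)] at htT
        exact htT
      have h1 : 0 < 2 * Z W u0 y + t * b - t * s := by linarith
      have h2 : 0 < 2 * Z W u0 y + t * b + t * s := by
        nlinarith [mul_nonneg ht0.le hs0]
      nlinarith [mul_pos h1 h2]
    · push_neg at hD
      have hg : 0 < g := by nlinarith [sq_nonneg b]
      nlinarith [sq_nonneg (2 * g * t + b)]
  exact ⟨⟨fun i => (hCpos i).le, hrho, hZ'⟩, hCpos⟩

end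
end PaperStmt
end
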